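/- Let X be a geodesic metric space, {C_σ} a family of subsets with all distances d(·, C_σ) positive on a convex subset T, and for x ∈ T, ξ a unit tangent direction, let p̃(x,ξ) = sup_σ ⟨ν_σ(x), ξ⟩ / d(x, C_σ) (in a Riemannian manifold T, ν_σ(x) the unit initial vector of the geodesic from x to its nearest point on C_σ). Then for any C¹ path α : [0,1] → T from x to y, F₂(x,y) = sup_σ log(d(x,C_σ)/d(y,C_σ)) ≤ ∫₀¹ p̃(α(t), α'(t)) dt. Hence F₂(x,y) ≤ F₃(x,y) := inf_α ∫₀¹ p̃(α(t), α'(t)) dt. -/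

import Mathlib

open Metric MeasureTheory

/-- Comparison F₂ ≤ F₃ (Theorem 2): given convex complete subsets C_σ at positive distance
from T, with −ν_σ(x) the (unit) gradient of x ↦ d(x,C_σ), and the Finsler norm
p̃(x,ξ) = sup_σ ⟪ν_σ(x),ξ⟫/d(x,C_σ), every C¹ path α from x to y in T satisfies
F₂(x,y) = sup_σ log(d(x,C_σ)/d(y,C_σ)) ≤ ∫₀¹ p̃(α(t),α'(t)) dt; hence
F₂(x,y) ≤ F₃(x,y) := inf over such paths of their p̃-length. -/
theorem stmt19 {E : Type*} [NormedAddCommGroup E] [InnerProductSpace ℝ E] [CompleteSpace E]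
    {S : Type*} [Nonempty S] (T : Set E) (C : S → Set E)
    (hCne : ∀ σ, (C σ).Nonempty) (hCcomp : ∀ σ, IsComplete (C σ))
    (hCconv : ∀ σ, Convex ℝ (C σ))
    (hd : ∀ x ∈ T, ∀ σ, 0 < infDist x (C σ))
    (ν : S → E → E) (hν : ∀ σ, ∀ x ∈ T, ‖ν σ x‖ = 1)
    (hgrad : ∀ σ, ∀ x ∈ T, HasGradientAt (fun q => infDist q (C σ)) (-(ν σ x)) x)
    (p : E → E → ℝ)
    (hp : ∀ x ξ, p x ξ = sSup {r : ℝ | ∃ σ, r = (inner ℝ (ν σ x) ξ : ℝ) / infDist x (C σ)})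
    (hbdd : ∀ x ∈ T, ∀ ξ : E, BddAbove {r : ℝ | ∃ σ, r = (inner ℝ (ν σ x) ξ : ℝ) / infDist x (C σ)})
    (x y : E) (hx : x ∈ T) (hy : y ∈ T) :
    (∀ α α' : ℝ → E, (∀ t ∈ Set.Icc (0 : ℝ) 1, HasDerivAt α (α' t) t) →
      ContinuousOn α' (Set.Icc (0 : ℝ) 1) → (∀ t ∈ Set.Icc (0 : ℝ) 1, α t ∈ T) →
      α 0 = x → α 1 = y →
      IntervalIntegrable (fun t => p (α t) (α' t)) volume 0 1 →
      sSup {r : ℝ | ∃ σ, r = Real.log (infDist x (C σ) / infDist y (C σ))} ≤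
        ∫ t in (0 : ℝ)..1, p (α t) (α' t)) ∧
    ({l : ℝ | ∃ α α' : ℝ → E, (∀ t ∈ Set.Icc (0 : ℝ) 1, HasDerivAt α (α' t) t) ∧
        ContinuousOn α' (Set.Icc (0 : ℝ) 1) ∧ (∀ t ∈ Set.Icc (0 : ℝ) 1, α t ∈ T) ∧
        α 0 = x ∧ α 1 = y ∧ IntervalIntegrable (fun t => p (α t) (α' t)) volume 0 1 ∧
        l = ∫ t in (0 : ℝ)..1, p (α t) (α' t)}.Nonempty →
      sSup {r : ℝ | ∃ σ, r = Real.log (infDist x (C σ) / infDist y (C σ))} ≤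
        sInf {l : ℝ | ∃ α α' : ℝ → E, (∀ t ∈ Set.Icc (0 : ℝ) 1, HasDerivAt α (α' t) t) ∧
          ContinuousOn α' (Set.Icc (0 : ℝ) 1) ∧ (∀ t ∈ Set.Icc (0 : ℝ) 1, α t ∈ T) ∧
          α 0 = x ∧ α 1 = y ∧ IntervalIntegrable (fun t => p (α t) (α' t)) volume 0 1 ∧
          l = ∫ t in (0 : ℝ)..1, p (α t) (α' t)}) := by
  have H : ∀ α α' : ℝ → E, (∀ t ∈ Set.Icc (0 : ℝ) 1, HasDerivAt α (α' t) t) →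
      ContinuousOn α' (Set.Icc (0 : ℝ) 1) → (∀ t ∈ Set.Icc (0 : ℝ) 1, α t ∈ T) →
      α 0 = x → α 1 = y →
      IntervalIntegrable (fun t => p (α t) (α' t)) volume 0 1 →
      sSup {r : ℝ | ∃ σ, r = Real.log (infDist x (C σ) / infDist y (C σ))} ≤
        ∫ t in (0 : ℝ)..1, p (α t) (α' t) := by
    intro α α' hder hc hT h0 h1 hint
    refine csSup_le ⟨_, Classical.arbitrary S, rfl⟩ ?_
    rintro r ⟨σ, rfl⟩
    -- key: log(d x / d y) ≤ ∫ p
    have hmem : ∀ t ∈ Set.Icc (0:ℝ) 1, α t ∈ T := hT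
    have hpos : ∀ t ∈ Set.Icc (0:ℝ) 1, 0 < infDist (α t) (C σ) :=
      fun t ht => hd _ (hT t ht) σ
    -- derivative of t ↦ -log (infDist (α t) (C σ))
    have hderg : ∀ t ∈ Set.Icc (0:ℝ) 1, HasDerivAt
        (fun t => -Real.log (infDist (α t) (C σ)))
        ((inner ℝ (ν σ (α t)) (α' t) : ℝ) / infDist (α t) (C σ)) t := by
      intro t ht
      have hg := (hgrad σ (α t) (hT t ht)).hasFDerivAt
      have hD := hg.comp_hasDerivAt t (hder t ht)
      simp only [InnerProductSpace.toDual_apply_apply] at hD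
      have hD2 : HasDerivAt (fun t => infDist (α t) (C σ))
          (-(inner ℝ (ν σ (α t)) (α' t) : ℝ)) t := by
        simp [inner_neg_left] at hD
        exact hD
      have := (hD2.log (hpos t ht).ne').neg
      simp [neg_div] at this
      exact this
    have hcont : ContinuousOn (fun t => -Real.log (infDist (α t) (C σ)))
        (Set.Icc (0:ℝ) 1) := by
      have hαc : ContinuousOn α (Set.Icc (0:ℝ) 1) :=
        fun t ht => (hder t ht).continuousAt.continuousWithinAt
      have : ContinuousOn (fun t => infDist (α t) (C σ)) (Set.Icc (0:ℝ) 1) :=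
        (continuous_infDist_pt (C σ)).comp_continuousOn hαc
      exact (this.log (fun t ht => (hpos t ht).ne')).neg
    have hφint : IntegrableOn (fun t => p (α t) (α' t)) (Set.Icc (0:ℝ) 1) :=
      (intervalIntegrable_iff_integrableOn_Icc_of_le (by norm_num)).mp hint
    have key := intervalIntegral.sub_le_integral_of_hasDeriv_right_of_le
      (g := fun t => -Real.log (infDist (α t) (C σ)))
      (g' := fun t => (inner ℝ (ν σ (α t)) (α' t) : ℝ) / infDist (α t) (C σ))
      (φ := fun t => p (α t) (α' t)) (a := 0) (b := 1) (by norm_num)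
      hcont
      (fun t ht => (hderg t (Set.mem_Icc_of_Ioo ht)).hasDerivWithinAt)
      hφint
      (fun t ht => by
        show _ ≤ p (α t) (α' t)
        rw [hp]
        exact le_csSup (hbdd _ (hT t (Set.mem_Icc_of_Ioo ht)) _) ⟨σ, rfl⟩)
    have heq : Real.log (infDist x (C σ) / infDist y (C σ)) =
        (-Real.log (infDist (α 1) (C σ))) - (-Real.log (infDist (α 0) (C σ))) := by
      rw [h0, h1, Real.log_div (hd x hx σ).ne' (hd y hy σ).ne']
      ring
    rw [heq]
    exact key
  refine ⟨H, fun hne => le_csInf hne ?_⟩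
  rintro l ⟨α, α', hder, hc, hT, h0, h1, hint, rfl⟩
  exact H α α' hder hc hT h0 h1 hint
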